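/- Let K, d, N, M be positive integers, W ∈ ℝ^{K×d} a weight matrix with row vectors W_k ∈ ℝ^d, and b ∈ ℝ^K a bias vector. Let f_l : Fin N → ℝ^d and f_ul : Fin M → ℝ^d be feature vectors with true labels y_l : Fin N → Fin K and y_ul : Fin M → Fin K; define logits z_l(i) = W·f_l(i) + b and z_ul(i) = W·f_ul(i) + b, and let h_l : Fin N → Fin K and h_ul : Fin M → Fin K be argmax selectors with z_l(i)_{h_l(i)} = max_k z_l(i)_k and z_ul(i)_{h_ul(i)} = max_k z_ul(i)_k. Define the hard-max surrogate loss ℓ̃(v, y) = max_k v_k − v_y and the empirical risks R̃_l = (1/N)·∑_i ℓ̃(z_l(i), y_l(i)) and R̃_ul = (1/M)·∑_i ℓ̃(z_ul(i), y_ul(i)). Then |R̃_ul − R̃_l| ≤ ∑_{k=1}^{K} [ ∑_{j=1}^{d} |W_{k,j}|·|( (1/N)·∑_i 𝟙[y_l(i)=k]·f_l(i) − (1/M)·∑_i 𝟙[y_ul(i)=k]·f_ul(i) )_j| + |b_k|·|(1/N)·∑_i 𝟙[y_l(i)=k] − (1/M)·∑_i 𝟙[y_ul(i)=k]| + ∑_{j=1}^{d}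 |W_{k,j}|·|( (1/N)·∑_i 𝟙[h_l(i)=k]·f_l(i) − (1/M)·∑_i 𝟙[h_ul(i)=k]·f_ul(i) )_j| + |b_k|·|(1/N)·∑_i 𝟙[h_l(i)=k] − (1/M)·∑_i 𝟙[h_ul(i)=k]| ]. -/
import Mathlib


open Finset

lemma risk_expand (n K d : ℕ) (W : Fin K → Fin d → ℝ) (b : Fin K → ℝ)
    (f : Fin n → Fin d → ℝ) (g : Fin n → Fin K) (z : Fin n → Fin K → ℝ)
    (hz : ∀ i k, z i k = (∑ j, W k j * f i j) + b k) (c : ℝ) :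
    c * ∑ i, z i (g i) =
      ∑ k, ((∑ j, W k j * (c * ∑ i, (if g i = k then (1:ℝ) else 0) * f i j)) +
        b k * (c * ∑ i, (if g i = k then (1:ℝ) else 0))) := by
  have h1 : ∀ i : Fin n, z i (g i) = ∑ k, (if g i = k then (1:ℝ) else 0) * z i k := by
    intro i
    rw [Finset.sum_eq_single (g i)]
    · simp
    · intro k _ hk; simp [Ne.symm hk]
    · intro h; exact absurd (Finset.mem_univ _) h
  calc c * ∑ i, z i (g i)
      = ∑ k, c * ∑ i, (if g i = k then (1:ℝ) else 0) * z i k := by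
        simp_rw [h1]; rw [Finset.sum_comm, Finset.mul_sum]
    _ = _ := by
        refine Finset.sum_congr rfl fun k _ => ?_
        have h2 : ∀ i : Fin n, (if g i = k then (1:ℝ) else 0) * z i k
            = (∑ j, W k j * ((if g i = k then (1:ℝ) else 0) * f i j))
              + b k * (if g i = k then (1:ℝ) else 0) := by
          intro i
          rw [hz, mul_add]
          congr 1
          · rw [Finset.mul_sum]; exact Finset.sum_congr rfl fun j _ => by ring
          · ring
        simp_rw [h2]
        rw [Finset.sum_add_distrib, mul_add]
        congr 1
        · rw [Finset.sum_comm, Finset.mul_sum]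
          refine Finset.sum_congr rfl fun j _ => ?_
          rw [Finset.mul_sum, Finset.mul_sum, Finset.mul_sum]
          exact Finset.sum_congr rfl fun i _ => by ring
        · rw [← Finset.mul_sum]; ring

lemma tri_bound (d : ℕ) (w a a' : Fin d → ℝ) (bb c c' : ℝ) :
    |((∑ j, w j * a j) + bb * c) - ((∑ j, w j * a' j) + bb * c')| ≤
      (∑ j, |w j| * |a j - a' j|) + |bb| * |c - c'| := by
  have h : ((∑ j, w j * a j) + bb * c) - ((∑ j, w j * a' j) + bb * c')
      = (∑ j, w j * (a j - a' j)) + bb * (c - c') := by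
    have h2 : ∑ j, w j * (a j - a' j) = (∑ j, w j * a j) - ∑ j, w j * a' j := by
      rw [← Finset.sum_sub_distrib]; exact Finset.sum_congr rfl fun j _ => by ring
    rw [h2]; ring
  rw [h]
  refine (abs_add_le _ _).trans (add_le_add ?_ ?_)
  · exact (Finset.abs_sum_le_sum_abs _ _).trans
      (le_of_eq (Finset.sum_congr rfl fun j _ => (abs_mul _ _)))
  · exact le_of_eq (abs_mul _ _)


/-- Theorem 1 (exact hard-max form): the gap between the hard-max surrogate empirical
risks on the unlabeled and labeled sets is bounded by per-class misalignments of mean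
features (weighted by `|W_k|`) and label frequencies (weighted by `|b_k|`), computed with
the true labels and with the predicted (argmax) labels. -/
theorem generalization_gap_bound
    (K d N M : ℕ) (hK : 0 < K) (hd : 0 < d) (hN : 0 < N) (hM : 0 < M)
    (W : Fin K → Fin d → ℝ) (b : Fin K → ℝ)
    (fl : Fin N → Fin d → ℝ) (ful : Fin M → Fin d → ℝ)
    (yl : Fin N → Fin K) (yul : Fin M → Fin K)
    (zl : Fin N → Fin K → ℝ) (zul : Fin M → Fin K → ℝ)
    (hzl : ∀ i k, zl i k = (∑ j : Fin d, W k j * fl i j) + b k)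
    (hzul : ∀ i k, zul i k = (∑ j : Fin d, W k j * ful i j) + b k)
    (hl : Fin N → Fin K) (hul : Fin M → Fin K)
    (hargl : ∀ i, zl i (hl i) =
      Finset.univ.sup' (Finset.univ_nonempty_iff.mpr (Fin.pos_iff_nonempty.mp hK)) (zl i))
    (hargul : ∀ i, zul i (hul i) =
      Finset.univ.sup' (Finset.univ_nonempty_iff.mpr (Fin.pos_iff_nonempty.mp hK)) (zul i)) :
    |((1 : ℝ) / M) * ∑ i : Fin M,
        (Finset.univ.sup' (Finset.univ_nonempty_iff.mpr (Fin.pos_iff_nonempty.mp hK)) (zul i) -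
          zul i (yul i)) -
      ((1 : ℝ) / N) * ∑ i : Fin N,
        (Finset.univ.sup' (Finset.univ_nonempty_iff.mpr (Fin.pos_iff_nonempty.mp hK)) (zl i) -
          zl i (yl i))| ≤
    ∑ k : Fin K,
      ((∑ j : Fin d, |W k j| *
          |((1 : ℝ) / N) * ∑ i : Fin N, (if yl i = k then (1 : ℝ) else 0) * fl i j -
           ((1 : ℝ) / M) * ∑ i : Fin M, (if yul i = k then (1 : ℝ) else 0) * ful i j|) +
       |b k| * |((1 : ℝ) / N) * ∑ i : Fin N, (if yl i = k then (1 : ℝ) else 0) -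
                ((1 : ℝ) / M) * ∑ i : Fin M, (if yul i = k then (1 : ℝ) else 0)| +
       (∑ j : Fin d, |W k j| *
          |((1 : ℝ) / N) * ∑ i : Fin N, (if hl i = k then (1 : ℝ) else 0) * fl i j -
           ((1 : ℝ) / M) * ∑ i : Fin M, (if hul i = k then (1 : ℝ) else 0) * ful i j|) +
       |b k| * |((1 : ℝ) / N) * ∑ i : Fin N, (if hl i = k then (1 : ℝ) else 0) -
                ((1 : ℝ) / M) * ∑ i : Fin M, (if hul i = k then (1 : ℝ) else 0)|) := by
  simp only [← hargl, ← hargul]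
  have eA := risk_expand M K d W b ful hul zul hzul ((1:ℝ)/M)
  have eB := risk_expand M K d W b ful yul zul hzul ((1:ℝ)/M)
  have eC := risk_expand N K d W b fl hl zl hzl ((1:ℝ)/N)
  have eD := risk_expand N K d W b fl yl zl hzl ((1:ℝ)/N)
  have key : ((1:ℝ)/M) * ∑ i, (zul i (hul i) - zul i (yul i)) -
      ((1:ℝ)/N) * ∑ i, (zl i (hl i) - zl i (yl i)) =
      ∑ k, ((((∑ j, W k j * (((1:ℝ)/N) * ∑ i, (if yl i = k then (1:ℝ) else 0) * fl i j)) +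
          b k * (((1:ℝ)/N) * ∑ i, (if yl i = k then (1:ℝ) else 0))) -
         ((∑ j, W k j * (((1:ℝ)/M) * ∑ i, (if yul i = k then (1:ℝ) else 0) * ful i j)) +
          b k * (((1:ℝ)/M) * ∑ i, (if yul i = k then (1:ℝ) else 0)))) +
        (((∑ j, W k j * (((1:ℝ)/M) * ∑ i, (if hul i = k then (1:ℝ) else 0) * ful i j)) +
          b k * (((1:ℝ)/M) * ∑ i, (if hul i = k then (1:ℝ) else 0))) -
         ((∑ j, W k j * (((1:ℝ)/N) * ∑ i, (if hl i = k then (1:ℝ) else 0) * fl i j)) +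
          b k * (((1:ℝ)/N) * ∑ i, (if hl i = k then (1:ℝ) else 0))))) := by
    rw [Finset.sum_sub_distrib, Finset.sum_sub_distrib, mul_sub, mul_sub, eA, eB, eC, eD]
    rw [← Finset.sum_sub_distrib, ← Finset.sum_sub_distrib, ← Finset.sum_sub_distrib]
    exact Finset.sum_congr rfl fun k _ => by ring
  rw [key]
  refine (Finset.abs_sum_le_sum_abs _ _).trans (Finset.sum_le_sum fun k _ => ?_)
  refine (abs_add_le _ _).trans ?_
  have h1 := tri_bound d (W k)
    (fun j => ((1:ℝ)/N) * ∑ i, (if yl i = k then (1:ℝ) else 0) * fl i j)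
    (fun j => ((1:ℝ)/M) * ∑ i, (if yul i = k then (1:ℝ) else 0) * ful i j)
    (b k) (((1:ℝ)/N) * ∑ i, (if yl i = k then (1:ℝ) else 0))
    (((1:ℝ)/M) * ∑ i, (if yul i = k then (1:ℝ) else 0))
  have h2 := tri_bound d (W k)
    (fun j => ((1:ℝ)/N) * ∑ i, (if hl i = k then (1:ℝ) else 0) * fl i j)
    (fun j => ((1:ℝ)/M) * ∑ i, (if hul i = k then (1:ℝ) else 0) * ful i j)
    (b k) (((1:ℝ)/N) * ∑ i, (if hl i = k then (1:ℝ) else 0))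
    (((1:ℝ)/M) * ∑ i, (if hul i = k then (1:ℝ) else 0))
  rw [abs_sub_comm] at h2
  calc _ ≤ _ := add_le_add h1 h2
    _ = _ := by ring
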